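/- The worst-case CVaR at level α of a random variable X over all distributions with mean μ and variance σ² equals μ + σ·√(α/(1−α)); in particular it is finite and the constraint sup CVaR_α ≤ 0 is equivalent to μ + σ√(α/(1−α)) ≤ 0. -/

import Mathlib

open MeasureTheory

lemma dirac_integrable (f : ℝ → ℝ) (a : ℝ) : Integrable f (Measure.dirac a) :=
  (integrable_const (f a)).congr (ae_eq_dirac f).symm

lemma two_point_integral (a b : ℝ) (x₁ x₂ : ℝ) (ha : 0 ≤ a) (hb : 0 ≤ b) (f : ℝ → ℝ) :
    ∫ x, f x ∂((ENNReal.ofReal a) • Measure.dirac x₁ + (ENNReal.ofReal b) • Measure.dirac x₂)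
      = a * f x₁ + b * f x₂ := by
  rw [integral_add_measure ((dirac_integrable f x₁).smul_measure ENNReal.ofReal_ne_top)
      ((dirac_integrable f x₂).smul_measure ENNReal.ofReal_ne_top),
    integral_smul_measure, integral_smul_measure, integral_dirac, integral_dirac,
    ENNReal.toReal_ofReal ha, ENNReal.toReal_ofReal hb, smul_eq_mul, smul_eq_mul]

lemma cvar_upper (α μ σ : ℝ) (hα0 : 0 < α) (hα1 : α < 1) (hσ : 0 < σ)
    (P : Measure ℝ) (hP : IsProbabilityMeasure P)
    (hx : Integrable (fun x : ℝ => x) P) (hx2 : Integrable (fun x : ℝ => x ^ 2) P)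
    (hmean : (∫ x, x ∂P) = μ) (hvar : (∫ x, (x - μ) ^ 2 ∂P) = σ ^ 2) :
    sInf (Set.range fun β : ℝ => β + (1 / (1 - α)) * ∫ x, max (x - β) 0 ∂P)
      ≤ μ + σ * Real.sqrt (α / (1 - α)) := by
  have h1α : 0 < 1 - α := by linarith
  set r := Real.sqrt (α / (1 - α)) with hrdef
  have hr0 : 0 < r := Real.sqrt_pos.2 (div_pos hα0 h1α)
  have hr2 : r ^ 2 = α / (1 - α) := Real.sq_sqrt (div_pos hα0 h1α).le
  have hr2' : r ^ 2 * (1 - α) = α := by rw [hr2]; field_simp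
  -- integrability of max (x - β) 0
  have hg : ∀ β : ℝ, Integrable (fun x : ℝ => max (x - β) 0) P := by
    intro β
    exact (hx.sub (integrable_const β)).sup (integrable_const 0)
  have hgnn : ∀ β : ℝ, 0 ≤ ∫ x, max (x - β) 0 ∂P := fun β =>
    integral_nonneg fun x => le_max_right _ _
  have hsubint : ∀ β : ℝ, (∫ x, x - β ∂P) = μ - β := by
    intro β
    rw [integral_sub hx (integrable_const β), hmean, integral_const]
    simp
  have hge : ∀ β : ℝ, μ - β ≤ ∫ x, max (x - β) 0 ∂P := by
    intro β
    rw [← hsubint β]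
    exact integral_mono (hx.sub (integrable_const β)) (hg β) fun x => le_max_left _ _
  have hlow : ∀ β : ℝ, μ ≤ β + (1 / (1 - α)) * ∫ x, max (x - β) 0 ∂P := by
    intro β
    have h1 : (1:ℝ) ≤ 1 / (1 - α) := by rw [le_div_iff₀ h1α]; linarith
    nlinarith [hge β, hgnn β]
  have hbdd : BddBelow (Set.range fun β : ℝ => β + (1 / (1 - α)) * ∫ x, max (x - β) 0 ∂P) := by
    refine ⟨μ, ?_⟩
    rintro y ⟨β, rfl⟩
    exact hlow β
  -- square integrals
  have hsq : ∀ β : ℝ, Integrable (fun x : ℝ => (x - β) ^ 2) P := by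
    intro β
    have e : (fun x : ℝ => (x - β) ^ 2) = fun x => (x ^ 2 + (-(2 * β)) * x) + β ^ 2 := by
      funext x; ring
    rw [e]
    exact (hx2.add (hx.const_mul _)).add (integrable_const _)
  have hsqint : ∀ β : ℝ, (∫ x, (x - β) ^ 2 ∂P) = σ ^ 2 + (μ - β) ^ 2 := by
    intro β
    have e : (fun x : ℝ => (x - β) ^ 2)
        = fun x => ((x - μ) ^ 2 + (2 * (μ - β)) * x) + (β ^ 2 - μ ^ 2) := by
      funext x; ring
    have hI1 : Integrable (fun x : ℝ => (x - μ) ^ 2 + 2 * (μ - β) * x) P := by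
      exact (hsq μ).add (hx.const_mul _)
    have hI2 : Integrable (fun x : ℝ => 2 * (μ - β) * x) P := by exact hx.const_mul _
    rw [e, integral_add hI1 (integrable_const _),
      integral_add (hsq μ) hI2, integral_const_mul, hvar, hmean, integral_const]
    simp only [probReal_univ, measure_univ, ENNReal.toReal_one, smul_eq_mul, one_mul]
    ring
  -- the optimal β and the bound constant
  set β := μ - σ * (1 - 2 * α) / (2 * r * (1 - α)) with hβdef
  set c := σ / (2 * r * (1 - α)) with hcdef
  have hc0 : 0 < c := by positivity
  have hμβ : μ - β = σ * (1 - 2 * α) / (2 * r * (1 - α)) := by rw [hβdef]; ring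
  have hc2 : c ^ 2 = σ ^ 2 + (μ - β) ^ 2 := by
    rw [hcdef, hμβ]
    field_simp
    nlinarith [hr2', sq_nonneg σ, sq_nonneg r]
  -- pointwise bound
  have hpt : ∀ x : ℝ, max (x - β) 0 ≤ ((x - β) + ((x - β) ^ 2 + c ^ 2) / (2 * c)) / 2 := by
    intro x
    set u := x - β with hu
    have habs : |u| ≤ (u ^ 2 + c ^ 2) / (2 * c) := by
      rw [le_div_iff₀ (by positivity)]
      nlinarith [sq_nonneg (|u| - c), sq_abs u]
    have h1 : max u 0 ≤ (u + |u|) / 2 := by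
      apply max_le
      · have := le_abs_self u; linarith
      · have := neg_abs_le u; linarith
    linarith
  -- integral of the bound
  have hIb : (∫ x, ((x - β) + ((x - β) ^ 2 + c ^ 2) / (2 * c)) / 2 ∂P) = ((μ - β) + c) / 2 := by
    have e : (fun x : ℝ => ((x - β) + ((x - β) ^ 2 + c ^ 2) / (2 * c)) / 2)
        = fun x => ((1 / 2) * x + (1 / (4 * c)) * (x - β) ^ 2) + (c / 4 - β / 2) := by
      funext x; field_simp; ring
    have hI1 : Integrable (fun x : ℝ => 1 / 2 * x + 1 / (4 * c) * (x - β) ^ 2) P := by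
      exact (hx.const_mul _).add ((hsq β).const_mul _)
    have hI2 : Integrable (fun x : ℝ => 1 / (4 * c) * (x - β) ^ 2) P := by
      exact (hsq β).const_mul _
    have hI3 : Integrable (fun x : ℝ => 1 / 2 * x) P := by exact hx.const_mul _
    rw [e, integral_add hI1 (integrable_const _),
      integral_add hI3 hI2, integral_const_mul,
      integral_const_mul, hmean, hsqint β, integral_const]
    simp only [probReal_univ, measure_univ, ENNReal.toReal_one, smul_eq_mul, one_mul]
    rw [← hc2]
    field_simp
    ring
  have hIle : (∫ x, max (x - β) 0 ∂P) ≤ ((μ - β) + c) / 2 := by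
    rw [← hIb]
    have hIb2 : Integrable (fun x : ℝ => ((x - β) + ((x - β) ^ 2 + c ^ 2) / (2 * c)) / 2) P := by
      exact ((hx.sub (integrable_const β)).add
        (((hsq β).add (integrable_const (c ^ 2))).div_const _)).div_const _
    exact integral_mono (hg β) hIb2 hpt
  have hfinal : β + (1 / (1 - α)) * (((μ - β) + c) / 2) = μ + σ * r := by
    rw [hβdef, hcdef]
    field_simp
    linear_combination (-(4*σ*(1-α))) * hr2'
  calc sInf (Set.range fun β : ℝ => β + (1 / (1 - α)) * ∫ x, max (x - β) 0 ∂P)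
      ≤ β + (1 / (1 - α)) * ∫ x, max (x - β) 0 ∂P := csInf_le hbdd ⟨β, rfl⟩
    _ ≤ β + (1 / (1 - α)) * (((μ - β) + c) / 2) := by
        have h1 : 0 < 1 / (1 - α) := by positivity
        nlinarith [hIle]
    _ = μ + σ * r := hfinal

lemma cvar_witness (α μ σ : ℝ) (hα0 : 0 < α) (hα1 : α < 1) (hσ : 0 < σ) :
    ∃ P : Measure ℝ, IsProbabilityMeasure P ∧
        Integrable (fun x : ℝ => x) P ∧ Integrable (fun x : ℝ => x ^ 2) P ∧
        (∫ x, x ∂P) = μ ∧ (∫ x, (x - μ) ^ 2 ∂P) = σ ^ 2 ∧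
        μ + σ * Real.sqrt (α / (1 - α)) = sInf (Set.range fun β : ℝ =>
          β + (1 / (1 - α)) * ∫ x, max (x - β) 0 ∂P) := by
  have h1α : 0 < 1 - α := by linarith
  set r := Real.sqrt (α / (1 - α)) with hrdef
  have hr0 : 0 < r := Real.sqrt_pos.2 (div_pos hα0 h1α)
  have hr2 : r ^ 2 = α / (1 - α) := Real.sq_sqrt (div_pos hα0 h1α).le
  have hr2' : r ^ 2 * (1 - α) = α := by rw [hr2]; field_simp
  set x₁ := μ - σ / r with hx₁def
  set x₂ := μ + σ * r with hx₂def
  set P : Measure ℝ := (ENNReal.ofReal α) • Measure.dirac x₁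
      + (ENNReal.ofReal (1 - α)) • Measure.dirac x₂ with hPdef
  refine ⟨P, ?_, ?_, ?_, ?_, ?_, ?_⟩
  · constructor
    rw [hPdef]
    simp only [Measure.coe_add, Measure.coe_smul, Pi.add_apply, Pi.smul_apply, smul_eq_mul,
      measure_univ, mul_one]
    rw [← ENNReal.ofReal_add hα0.le h1α.le]
    norm_num
  · exact ((dirac_integrable (fun x => x) x₁).smul_measure ENNReal.ofReal_ne_top).add_measure
        ((dirac_integrable (fun x => x) x₂).smul_measure ENNReal.ofReal_ne_top)
  · exact ((dirac_integrable (fun x => x ^ 2) x₁).smul_measure ENNReal.ofReal_ne_top).add_measure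
        ((dirac_integrable (fun x => x ^ 2) x₂).smul_measure ENNReal.ofReal_ne_top)
  · rw [hPdef, two_point_integral α (1 - α) x₁ x₂ hα0.le h1α.le (fun x => x),
      hx₁def, hx₂def]
    field_simp
    linear_combination σ * hr2'
  · rw [hPdef, two_point_integral α (1 - α) x₁ x₂ hα0.le h1α.le (fun x => (x - μ) ^ 2),
      hx₁def, hx₂def]
    have e1 : μ - σ / r - μ = -(σ / r) := by ring
    have e2 : μ + σ * r - μ = σ * r := by ring
    rw [e1, e2]
    have h1 : α * (-(σ / r)) ^ 2 = (1 - α) * σ ^ 2 := by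
      rw [neg_pow]
      field_simp
      linear_combination (-1) * hr2'
    have h2 : (1 - α) * (σ * r) ^ 2 = α * σ ^ 2 := by linear_combination σ ^ 2 * hr2'
    linarith
  · have hrange : ∀ β : ℝ, (β + (1 / (1 - α)) * ∫ x, max (x - β) 0 ∂P)
        = β + (1 / (1 - α)) * (α * max (x₁ - β) 0 + (1 - α) * max (x₂ - β) 0) := by
      intro β
      rw [hPdef, two_point_integral α (1 - α) x₁ x₂ hα0.le h1α.le (fun x => max (x - β) 0)]
    have hlb : ∀ β : ℝ, x₂ ≤ β + (1 / (1 - α)) * ∫ x, max (x - β) 0 ∂P := by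
      intro β
      rw [hrange β, mul_add]
      have t1 : 0 ≤ (1 / (1 - α)) * (α * max (x₁ - β) 0) := by positivity
      have t2 : (1 / (1 - α)) * ((1 - α) * max (x₂ - β) 0) = max (x₂ - β) 0 := by
        field_simp
      rw [t2]
      have t3 := le_max_left (x₂ - β) 0
      linarith
    have hval : x₂ + (1 / (1 - α)) * ∫ x, max (x - x₂) 0 ∂P = x₂ := by
      rw [hrange x₂]
      have h12 : x₁ - x₂ ≤ 0 := by
        rw [hx₁def, hx₂def]
        have : 0 < σ / r := by positivity
        have : 0 < σ * r := by positivity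
        linarith
      rw [max_eq_right h12, sub_self, max_self]
      ring
    have : x₂ = sInf (Set.range fun β : ℝ =>
        β + (1 / (1 - α)) * ∫ x, max (x - β) 0 ∂P) := by
      apply le_antisymm
      · apply le_csInf (Set.range_nonempty _)
        rintro y ⟨β, rfl⟩
        exact hlb β
      · exact csInf_le ⟨x₂, by rintro y ⟨β, rfl⟩; exact hlb β⟩ ⟨x₂, hval⟩
    rw [hx₂def] at this
    exact this

/-- The worst-case CVaR at level `α` over all distributions with mean `μ` and variance `σ²`
equals `μ + σ√(α/(1−α))`; in particular the worst-case CVaR constraint `sup CVaR_α ≤ 0`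
is equivalent to `μ + σ√(α/(1−α)) ≤ 0`. -/
theorem stmt8 (α μ σ : ℝ) (hα : α ∈ Set.Ioo (0 : ℝ) 1) (hσ : 0 < σ) :
    sSup {y : ℝ | ∃ P : Measure ℝ, IsProbabilityMeasure P ∧
        Integrable (fun x : ℝ => x) P ∧ Integrable (fun x : ℝ => x ^ 2) P ∧
        (∫ x, x ∂P) = μ ∧ (∫ x, (x - μ) ^ 2 ∂P) = σ ^ 2 ∧
        y = sInf (Set.range fun β : ℝ =>
          β + (1 / (1 - α)) * ∫ x, max (x - β) 0 ∂P)}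
      = μ + σ * Real.sqrt (α / (1 - α)) ∧
    (sSup {y : ℝ | ∃ P : Measure ℝ, IsProbabilityMeasure P ∧
        Integrable (fun x : ℝ => x) P ∧ Integrable (fun x : ℝ => x ^ 2) P ∧
        (∫ x, x ∂P) = μ ∧ (∫ x, (x - μ) ^ 2 ∂P) = σ ^ 2 ∧
        y = sInf (Set.range fun β : ℝ =>
          β + (1 / (1 - α)) * ∫ x, max (x - β) 0 ∂P)} ≤ 0
      ↔ μ + σ * Real.sqrt (α / (1 - α)) ≤ 0) := by
  obtain ⟨hα0, hα1⟩ := hα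
  have key : sSup {y : ℝ | ∃ P : Measure ℝ, IsProbabilityMeasure P ∧
        Integrable (fun x : ℝ => x) P ∧ Integrable (fun x : ℝ => x ^ 2) P ∧
        (∫ x, x ∂P) = μ ∧ (∫ x, (x - μ) ^ 2 ∂P) = σ ^ 2 ∧
        y = sInf (Set.range fun β : ℝ =>
          β + (1 / (1 - α)) * ∫ x, max (x - β) 0 ∂P)}
      = μ + σ * Real.sqrt (α / (1 - α)) := by
    obtain ⟨P, h1, h2, h3, h4, h5, h6⟩ := cvar_witness α μ σ hα0 hα1 hσ
    have hmem : (μ + σ * Real.sqrt (α / (1 - α))) ∈ {y : ℝ | ∃ P : Measure ℝ,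
        IsProbabilityMeasure P ∧
        Integrable (fun x : ℝ => x) P ∧ Integrable (fun x : ℝ => x ^ 2) P ∧
        (∫ x, x ∂P) = μ ∧ (∫ x, (x - μ) ^ 2 ∂P) = σ ^ 2 ∧
        y = sInf (Set.range fun β : ℝ =>
          β + (1 / (1 - α)) * ∫ x, max (x - β) 0 ∂P)} :=
      ⟨P, h1, h2, h3, h4, h5, h6⟩
    have hub : ∀ y ∈ {y : ℝ | ∃ P : Measure ℝ, IsProbabilityMeasure P ∧
        Integrable (fun x : ℝ => x) P ∧ Integrable (fun x : ℝ => x ^ 2) P ∧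
        (∫ x, x ∂P) = μ ∧ (∫ x, (x - μ) ^ 2 ∂P) = σ ^ 2 ∧
        y = sInf (Set.range fun β : ℝ =>
          β + (1 / (1 - α)) * ∫ x, max (x - β) 0 ∂P)},
        y ≤ μ + σ * Real.sqrt (α / (1 - α)) := by
      rintro y ⟨Q, hQ, hqx, hqx2, hqm, hqv, rfl⟩
      exact cvar_upper α μ σ hα0 hα1 hσ Q hQ hqx hqx2 hqm hqv
    exact le_antisymm (csSup_le ⟨_, hmem⟩ hub) (le_csSup ⟨_, hub⟩ hmem)
  exact ⟨key, by rw [key]⟩
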